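/- Let μ be a Borel probability measure on [0,1] with μ ≠ δ_{2/3}. Then for every x ∈ Δ², for μ^ℕ-almost every ω ∈ Ω there exists a point p ∈ 𝒜 such that φ_n(x,ω) converges to p as n → ∞. (Almost sure convergence of every trajectory of the random dynamical system to one of the seven fixed points; Theorem 2.1.) -/

import Mathlib

open MeasureTheory ProbabilityTheory Filter Topology
open scoped ENNReal

noncomputable section

/-- The cubic stochastic operator `V_θ`, regarded as a map on (Euclidean) `ℝ³`. -/
def Vcso (θ : ℝ) (x : EuclideanSpace ℝ (Fin 3)) : EuclideanSpace ℝ (Fin 3) :=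
  WithLp.toLp 2 ![x 0 * ((x 0)^2 + 3*θ*(x 0)*(x 1 + x 2) + 3*(1-θ)*((x 1)^2 + (x 2)^2) + 2*(x 1)*(x 2)),
    x 1 * ((x 1)^2 + 3*θ*(x 1)*(x 2 + x 0) + 3*(1-θ)*((x 2)^2 + (x 0)^2) + 2*(x 2)*(x 0)),
    x 2 * ((x 2)^2 + 3*θ*(x 2)*(x 0 + x 1) + 3*(1-θ)*((x 0)^2 + (x 1)^2) + 2*(x 0)*(x 1))]

/-- The simplex `Δ² = {x ∈ ℝ³ : x₁,x₂,x₃ ≥ 0, x₁+x₂+x₃ = 1}`. -/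
def simplex2 : Set (EuclideanSpace ℝ (Fin 3)) :=
  {x | 0 ≤ x 0 ∧ 0 ≤ x 1 ∧ 0 ≤ x 2 ∧ x 0 + x 1 + x 2 = 1}

/-- The random orbit `φ_n(x) = V_{θ_n} ∘ ⋯ ∘ V_{θ_1}(x)` driven by the sequence
`θ_1, θ_2, … = θs 0, θs 1, …`. -/
def phiRDS (θs : ℕ → ℝ) : ℕ → EuclideanSpace ℝ (Fin 3) → EuclideanSpace ℝ (Fin 3)
  | 0, x => x
  | n+1, x => Vcso (θs n) (phiRDS θs n x)

/-- The vertex `e₁ = (1,0,0)`. -/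
def e1 : EuclideanSpace ℝ (Fin 3) := WithLp.toLp 2 ![1, 0, 0]

/-- The vertex `c = (1/2,1/2,0)`. -/
def cpt : EuclideanSpace ℝ (Fin 3) := WithLp.toLp 2 ![1/2, 1/2, 0]

/-- The vertex `C = (1/3,1/3,1/3)`. -/
def Cpt : EuclideanSpace ℝ (Fin 3) := WithLp.toLp 2 ![1/3, 1/3, 1/3]

/-- `G₁ = {y ∈ Δ² : y₁ ≥ y₂ ≥ y₃}`. -/
def G1 : Set (EuclideanSpace ℝ (Fin 3)) :=
  {y ∈ simplex2 | y 0 ≥ y 1 ∧ y 1 ≥ y 2}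

/-- The interior of `G₁`: `{y ∈ Δ² : y₁ > y₂ > y₃ > 0}`. -/
def intG1 : Set (EuclideanSpace ℝ (Fin 3)) :=
  {y ∈ simplex2 | y 0 > y 1 ∧ y 1 > y 2 ∧ y 2 > 0}

/-- The edge `M₁₂ = {y ∈ Δ² : y₁ = y₂ ≥ y₃}`. -/
def M12 : Set (EuclideanSpace ℝ (Fin 3)) :=
  {y ∈ simplex2 | y 0 = y 1 ∧ y 1 ≥ y 2}

/-- The edge `M₂₃ = {y ∈ Δ² : y₁ ≥ y₂ = y₃}`. -/
def M23 : Set (EuclideanSpace ℝ (Fin 3)) :=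
  {y ∈ simplex2 | y 0 ≥ y 1 ∧ y 1 = y 2}

/-- The edge `Γ₁₂ = {y ∈ Δ² : y₁ ≥ y₂, y₃ = 0}`. -/
def Gamma12 : Set (EuclideanSpace ℝ (Fin 3)) :=
  {y ∈ simplex2 | y 0 ≥ y 1 ∧ y 2 = 0}

/-- The seven fixed points `𝒜`. -/
def fixedA : Set (EuclideanSpace ℝ (Fin 3)) :=
  {WithLp.toLp 2 ![1,0,0], WithLp.toLp 2 ![0,1,0], WithLp.toLp 2 ![0,0,1], WithLp.toLp 2 ![1/2,1/2,0],
    WithLp.toLp 2 ![1/2,0,1/2], WithLp.toLp 2 ![0,1/2,1/2], WithLp.toLp 2 ![1/3,1/3,1/3]}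

/-- Positive part of `log t`, valued in `ℝ≥0∞`. -/
def logPos (t : ℝ) : ℝ≥0∞ := ENNReal.ofReal (Real.log t)

/-- Negative part of the extended logarithm (with `log 0 = -∞`), valued in `ℝ≥0∞`. -/
def logNeg (t : ℝ) : ℝ≥0∞ := if t ≤ 0 then ⊤ else ENNReal.ofReal (-Real.log t)

/-- `E log g(Θ) < 0` in the extended sense (the value `-∞` is allowed), where `Θ` has law `μ`:
the positive part of the extended expectation is strictly smaller than the negative part. -/
def expLogNeg (μ : Measure ℝ) (g : ℝ → ℝ) : Prop :=
  ∫⁻ θ, logPos (g θ) ∂μ < ∫⁻ θ, logNeg (g θ) ∂μ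

/-- `E log g(Θ) ≤ r` in the extended sense (the value `-∞` is allowed), where `Θ` has law `μ`. -/
def expLogLe (μ : Measure ℝ) (g : ℝ → ℝ) (r : ℝ) : Prop :=
  ∫⁻ θ, logPos (g θ) ∂μ + ENNReal.ofReal (-r) ≤ ∫⁻ θ, logNeg (g θ) ∂μ + ENNReal.ofReal r

/-- The topological support of a measure on `ℝ`: points all of whose open neighborhoods
have positive measure. -/
def measSupport (μ : Measure ℝ) : Set ℝ :=
  {t : ℝ | ∀ U : Set ℝ, IsOpen U → t ∈ U → 0 < μ U}

/-! ### Auxiliary machinery for the proof -/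

section Aux

/-- The scalar form of one component of the cubic stochastic operator. -/
def Waux (θ a b c : ℝ) : ℝ := a*(a^2+3*θ*a*(b+c)+3*(1-θ)*(b^2+c^2)+2*b*c)

lemma Waux_symm (θ a b c : ℝ) : Waux θ a b c = Waux θ a c b := by unfold Waux; ring

lemma Waux_clean (θ a b c : ℝ) (hsum : a + b + c = 1) :
    Waux θ a b c = a + (3*θ-2)*(a*(a-(a^2+b^2+c^2))) := by
  unfold Waux; linear_combination (a + a*c + a*b - a^2 + 3*a^2*θ) * hsum

lemma Waux_nonneg {θ a b c : ℝ} (h0 : 0 ≤ θ) (h1 : θ ≤ 1) (ha : 0 ≤ a) (hb : 0 ≤ b)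
    (hc : 0 ≤ c) : 0 ≤ Waux θ a b c := by
  unfold Waux; have h2 : 0 ≤ 1 - θ := by linarith
  positivity

lemma Waux_mono {θ a b c : ℝ} (h0 : 0 ≤ θ) (h1 : θ ≤ 1) (ha : 0 ≤ a) (hb : 0 ≤ b) (hc : 0 ≤ c)
    (hab : b ≤ a) : Waux θ b a c ≤ Waux θ a b c := by
  have key : Waux θ a b c - Waux θ b a c
      = (a-b)*((a-b)^2+3*(1-θ)*c^2+3*θ*c*(a+b)+6*θ*a*b) := by unfold Waux; ring
  nlinarith [sq_nonneg (a-b), mul_nonneg (mul_nonneg h0 hc) (add_nonneg ha hb),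
    mul_nonneg (mul_nonneg h0 ha) hb, mul_nonneg (sub_nonneg.2 h1) (sq_nonneg c),
    mul_nonneg (sub_nonneg.2 hab) (sq_nonneg (a-b))]

lemma Vcso_apply0 (θ : ℝ) (y : EuclideanSpace ℝ (Fin 3)) :
    Vcso θ y 0 = Waux θ (y 0) (y 1) (y 2) := by simp [Vcso, Waux]
lemma Vcso_apply1 (θ : ℝ) (y : EuclideanSpace ℝ (Fin 3)) :
    Vcso θ y 1 = Waux θ (y 1) (y 2) (y 0) := by simp [Vcso, Waux]
lemma Vcso_apply2 (θ : ℝ) (y : EuclideanSpace ℝ (Fin 3)) :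
    Vcso θ y 2 = Waux θ (y 2) (y 0) (y 1) := by simp [Vcso, Waux]

lemma fin3_cover {i0 i1 i2 : Fin 3} (h01 : i0 ≠ i1) (h02 : i0 ≠ i2) (h12 : i1 ≠ i2) :
    ∀ j : Fin 3, j = i0 ∨ j = i1 ∨ j = i2 := by
  fin_cases i0 <;> fin_cases i1 <;> fin_cases i2 <;> simp_all <;> decide

lemma fin3_sum {i0 i1 i2 : Fin 3} (h01 : i0 ≠ i1) (h02 : i0 ≠ i2) (h12 : i1 ≠ i2)
    (f : Fin 3 → ℝ) : f i0 + f i1 + f i2 = f 0 + f 1 + f 2 := by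
  fin_cases i0 <;> fin_cases i1 <;> fin_cases i2 <;> simp_all <;> ring

lemma Vcso_rep {i0 i1 i2 : Fin 3} (h01 : i0 ≠ i1) (h02 : i0 ≠ i2) (h12 : i1 ≠ i2)
    (θ : ℝ) (y : EuclideanSpace ℝ (Fin 3)) :
    Vcso θ y i0 = Waux θ (y i0) (y i1) (y i2) ∧
    Vcso θ y i1 = Waux θ (y i1) (y i2) (y i0) ∧
    Vcso θ y i2 = Waux θ (y i2) (y i0) (y i1) := by
  fin_cases i0 <;> fin_cases i1 <;> fin_cases i2 <;> simp_all <;>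
    simp [Vcso_apply0, Vcso_apply1, Vcso_apply2] <;>
    constructor <;> first | rfl | apply Waux_symm | (constructor <;> first | rfl | apply Waux_symm)

/-- One step preserves the simplex and a fixed coordinate ordering. -/
lemma Vcso_step {i0 i1 i2 : Fin 3}
    (hrep : ∀ (θ : ℝ) (y : EuclideanSpace ℝ (Fin 3)),
      Vcso θ y i0 = Waux θ (y i0) (y i1) (y i2) ∧
      Vcso θ y i1 = Waux θ (y i1) (y i2) (y i0) ∧
      Vcso θ y i2 = Waux θ (y i2) (y i0) (y i1))
    (hsum3 : ∀ f : Fin 3 → ℝ, f i0 + f i1 + f i2 = f 0 + f 1 + f 2)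
    {θ : ℝ} (h0 : 0 ≤ θ) (h1 : θ ≤ 1) {y : EuclideanSpace ℝ (Fin 3)}
    (hy : y ∈ simplex2) (hord : y i1 ≤ y i0 ∧ y i2 ≤ y i1) :
    Vcso θ y ∈ simplex2 ∧ Vcso θ y i1 ≤ Vcso θ y i0 ∧ Vcso θ y i2 ≤ Vcso θ y i1 := by
  obtain ⟨hy0, hy1, hy2, hys⟩ := hy
  obtain ⟨r0, r1, r2⟩ := hrep θ y
  have hnn : ∀ j : Fin 3, 0 ≤ y j := fun j => by fin_cases j <;> assumption
  have hs : y i0 + y i1 + y i2 = 1 := by rw [hsum3 (fun j => y j)]; exact hys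
  constructor
  · refine ⟨?_, ?_, ?_, ?_⟩
    · rw [Vcso_apply0]; exact Waux_nonneg h0 h1 (hnn 0) (hnn 1) (hnn 2)
    · rw [Vcso_apply1]; exact Waux_nonneg h0 h1 (hnn 1) (hnn 2) (hnn 0)
    · rw [Vcso_apply2]; exact Waux_nonneg h0 h1 (hnn 2) (hnn 0) (hnn 1)
    · have : Vcso θ y i0 + Vcso θ y i1 + Vcso θ y i2 = 1 := by
        rw [r0, r1, r2, Waux_clean θ _ _ _ hs,
          Waux_clean θ (y i1) (y i2) (y i0) (by linarith),
          Waux_clean θ (y i2) (y i0) (y i1) (by linarith)]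
        linear_combination (1 - (3*θ-2)*((y i0)^2+(y i1)^2+(y i2)^2)) * hs
      rw [← hsum3 (fun j => Vcso θ y j)]; exact this
  · constructor
    · rw [r0, r1, Waux_symm θ (y i1) (y i2) (y i0)]
      exact Waux_mono h0 h1 (hnn i0) (hnn i1) (hnn i2) hord.1
    · rw [r1, r2, Waux_symm θ (y i2) (y i0) (y i1)]
      exact Waux_mono h0 h1 (hnn i1) (hnn i2) (hnn i0) hord.2

lemma simplex_coord {y : EuclideanSpace ℝ (Fin 3)} (hy : y ∈ simplex2) :
    ∀ j : Fin 3, 0 ≤ y j ∧ y j ≤ 1 := by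
  obtain ⟨h0, h1, h2, hs⟩ := hy
  intro j; fin_cases j <;> constructor <;> simp <;> linarith

/-- Characterization of the seven fixed points. -/
lemma fixedA_char (y : EuclideanSpace ℝ (Fin 3)) (hy : y ∈ simplex2)
    (h : ∀ j : Fin 3, y j * (y j - ((y 0)^2 + (y 1)^2 + (y 2)^2)) = 0) : y ∈ fixedA := by
  obtain ⟨h0, h1, h2, hs⟩ := hy
  set Q := (y 0)^2 + (y 1)^2 + (y 2)^2 with hQ
  have c0 : y 0 = 0 ∨ y 0 = Q := (mul_eq_zero.1 (h 0)).imp id (fun h => sub_eq_zero.1 h)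
  have c1 : y 1 = 0 ∨ y 1 = Q := (mul_eq_zero.1 (h 1)).imp id (fun h => sub_eq_zero.1 h)
  have c2 : y 2 = 0 ∨ y 2 = Q := (mul_eq_zero.1 (h 2)).imp id (fun h => sub_eq_zero.1 h)
  have ext3 : ∀ a b c : ℝ, y 0 = a → y 1 = b → y 2 = c → y = WithLp.toLp 2 ![a,b,c] := by
    intro a b c ha hb hc; ext j; fin_cases j <;> simpa
  rcases c0 with c0|c0 <;> rcases c1 with c1|c1 <;> rcases c2 with c2|c2
  · exfalso; rw [c0, c1, c2] at hs; norm_num at hs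
  · have : Q = 1 := by nlinarith
    right; right; left; exact ext3 0 0 1 c0 c1 (by rw [c2, this])
  · have : Q = 1 := by nlinarith
    right; left; exact ext3 0 1 0 c0 (by rw [c1, this]) c2
  · have hq : Q = 1/2 := by nlinarith
    right; right; right; right; right; left
    exact ext3 0 (1/2) (1/2) c0 (by rw [c1,hq]) (by rw [c2,hq])
  · have : Q = 1 := by nlinarith
    left; exact ext3 1 0 0 (by rw [c0,this]) c1 c2
  · have hq : Q = 1/2 := by nlinarith
    right; right; right; right; left
    exact ext3 (1/2) 0 (1/2) (by rw [c0,hq]) c1 (by rw [c2,hq])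
  · have hq : Q = 1/2 := by nlinarith
    right; right; right; left
    exact ext3 (1/2) (1/2) 0 (by rw [c0,hq]) (by rw [c1,hq]) c2
  · have hq : Q = 1/3 := by nlinarith
    right; right; right; right; right; right
    exact ext3 (1/3) (1/3) (1/3) (by rw [c0,hq]) (by rw [c1,hq]) (by rw [c2,hq])

/-- Clamping to `[0,1]`. -/
def clamp (t : ℝ) : ℝ := max 0 (min 1 t)
lemma clamp_nonneg (t : ℝ) : 0 ≤ clamp t := le_max_left _ _
lemma clamp_le_one (t : ℝ) : clamp t ≤ 1 := max_le zero_le_one (min_le_left _ _)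
lemma clamp_eq {t : ℝ} (h : t ∈ Set.Icc (0:ℝ) 1) : clamp t = t := by
  unfold clamp; rw [min_eq_right h.2, max_eq_right h.1]
lemma measurable_clamp : Measurable clamp :=
  measurable_const.max (measurable_const.min measurable_id)

variable {Ω : Type*} [MeasurableSpace Ω]

/-- The filtration generated by `Θ 0, …, Θ (n-1)`. -/
def filtr (Θ : ℕ → Ω → ℝ) (n : ℕ) : MeasurableSpace Ω :=
  ⨆ k ∈ Set.Iio n, MeasurableSpace.comap (Θ k) inferInstance

lemma filtr_le (Θ : ℕ → Ω → ℝ) (hmeas : ∀ n, Measurable (Θ n)) (n : ℕ) :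
    filtr Θ n ≤ ‹MeasurableSpace Ω› := iSup₂_le fun k _ => (hmeas k).comap_le

lemma filtr_mono (Θ : ℕ → Ω → ℝ) : Monotone (filtr Θ) := fun _ _ h =>
  biSup_mono (fun _ hk => lt_of_lt_of_le hk h)

def filtrF (Θ : ℕ → Ω → ℝ) (hmeas : ∀ n, Measurable (Θ n)) :
    MeasureTheory.Filtration ℕ ‹MeasurableSpace Ω› :=
  ⟨filtr Θ, filtr_mono Θ, filtr_le Θ hmeas⟩

lemma measurable_theta_filtr (Θ : ℕ → Ω → ℝ) {k n : ℕ} (hk : k < n) :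
    Measurable[filtr Θ n] (Θ k) :=
  (comap_measurable (Θ k)).mono
    (le_biSup (fun k => MeasurableSpace.comap (Θ k) inferInstance) hk) le_rfl

lemma indep_filtr (P : Measure Ω) (Θ : ℕ → Ω → ℝ) (hmeas : ∀ n, Measurable (Θ n))
    (hindep : iIndepFun Θ P) (n : ℕ) :
    Indep (MeasurableSpace.comap (Θ n) inferInstance) (filtr Θ n) P := by
  have h := indep_iSup_of_disjoint (fun k => (hmeas k).comap_le) hindep.iIndep
    (S := {n}) (T := Set.Iio n) (by simp)
  simpa [filtr] using h

lemma integrable_of_bounded {P : Measure Ω} [IsProbabilityMeasure P] {g : Ω → ℝ} {C : ℝ}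
    (hg : AEStronglyMeasurable g P) (hb : ∀ ω, |g ω| ≤ C) : Integrable g P :=
  (integrable_const C).mono' hg (ae_of_all _ (by simpa using hb))

lemma condexp_step (P : Measure Ω) [IsProbabilityMeasure P]
    (Θ : ℕ → Ω → ℝ) (hmeas : ∀ n, Measurable (Θ n))
    (hindep : iIndepFun Θ P)
    (e : ℝ) (he : ∀ n, ∫ ω, (3 * clamp (Θ n ω) - 2) ∂P = e)
    (n : ℕ) (K : Ω → ℝ) (hK : Measurable[filtr Θ n] K) (hKb : ∀ ω, |K ω| ≤ 2) :
    P[(fun ω => K ω * (3 * clamp (Θ n ω) - 2)) | filtr Θ n] =ᵐ[P] fun ω => K ω * e := by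
  set g : Ω → ℝ := fun ω => 3 * clamp (Θ n ω) - 2 with hg
  have hgmeas : Measurable g :=
    ((measurable_clamp.comp (hmeas n)).const_mul 3).sub measurable_const
  have hgb : ∀ ω, |g ω| ≤ 2 := by
    intro ω; rw [abs_le]
    constructor <;> [skip; skip] <;>
      simp only [hg] <;> nlinarith [clamp_nonneg (Θ n ω), clamp_le_one (Θ n ω)]
  have hgint : Integrable g P := integrable_of_bounded hgmeas.aestronglyMeasurable hgb
  have hKint : Integrable K P :=
    integrable_of_bounded ((hK.mono (filtr_le Θ hmeas n) le_rfl)).aestronglyMeasurable hKb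
  have hKgint : Integrable (fun ω => K ω * g ω) P := by
    refine integrable_of_bounded (((hK.mono (filtr_le Θ hmeas n) le_rfl)).aestronglyMeasurable.mul
      hgmeas.aestronglyMeasurable) (C := 4) fun ω => ?_
    rw [abs_mul]
    calc |K ω| * |g ω| ≤ 2 * 2 := mul_le_mul (hKb ω) (hgb ω) (abs_nonneg _) (by norm_num)
    _ = 4 := by norm_num
  have h1 : P[(fun ω => K ω * g ω) | filtr Θ n] =ᵐ[P] K * P[g | filtr Θ n] :=
    condExp_mul_of_stronglyMeasurable_left hK.stronglyMeasurable hKgint hgint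
  have hgsm : StronglyMeasurable[MeasurableSpace.comap (Θ n) inferInstance] g :=
    Measurable.stronglyMeasurable
      (((measurable_clamp.comp (comap_measurable (Θ n))).const_mul 3).sub measurable_const)
  have h2 : P[g | filtr Θ n] =ᵐ[P] fun _ => ∫ ω, g ω ∂P :=
    condExp_indep_eq (hmeas n).comap_le (filtr_le Θ hmeas n) hgsm
      (indep_filtr P Θ hmeas hindep n)
  filter_upwards [h1, h2] with ω h1 h2
  simp only [hg] at h1 ⊢
  rw [h1, Pi.mul_apply, h2, he n]

/-- Almost-sure convergence of a bounded process with conditionally signed increments. -/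
lemma ae_exists_lim (P : Measure Ω) [IsProbabilityMeasure P]
    (Θ : ℕ → Ω → ℝ) (hmeas : ∀ n, Measurable (Θ n))
    (hindep : iIndepFun Θ P)
    (e : ℝ) (he : ∀ n, ∫ ω, (3 * clamp (Θ n ω) - 2) ∂P = e)
    (s K : ℕ → Ω → ℝ)
    (hs : ∀ n, Measurable[filtr Θ n] (s n)) (hsb : ∀ n ω, |s n ω| ≤ 1)
    (hK : ∀ n, Measurable[filtr Θ n] (K n)) (hKb : ∀ n ω, |K n ω| ≤ 2)
    (hstep : ∀ n ω, s (n+1) ω = s n ω + K n ω * (3 * clamp (Θ n ω) - 2))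
    (hsign : ∀ n ω, 0 ≤ K n ω * e) :
    ∀ᵐ ω ∂P, ∃ L, Tendsto (fun n => s n ω) atTop (𝓝 L) := by
  have hint : ∀ n, Integrable (s n) P := fun n =>
    integrable_of_bounded ((hs n).mono (filtr_le Θ hmeas n) le_rfl).aestronglyMeasurable (hsb n)
  have hadp : StronglyAdapted (filtrF Θ hmeas) s := fun n => (hs n).stronglyMeasurable
  have hsub : Submartingale s (filtrF Θ hmeas) P := by
    refine submartingale_nat hadp hint fun n => ?_
    have hrw : s (n+1) = s n + fun ω => K n ω * (3 * clamp (Θ n ω) - 2) := by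
      funext ω; exact hstep n ω
    have hKgint : Integrable (fun ω => K n ω * (3 * clamp (Θ n ω) - 2)) P := by
      have : (fun ω => K n ω * (3 * clamp (Θ n ω) - 2)) = fun ω => s (n+1) ω - s n ω := by
        funext ω; rw [hstep n ω]; ring
      rw [this]; exact (hint (n+1)).sub (hint n)
    have h1 : P[s (n+1) | filtr Θ n] =ᵐ[P]
        P[s n | filtr Θ n] + P[(fun ω => K n ω * (3 * clamp (Θ n ω) - 2)) | filtr Θ n] := by
      rw [hrw]; exact condExp_add (hint n) hKgint _
    have h2 : P[s n | filtr Θ n] = s n :=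
      condExp_of_stronglyMeasurable (filtr_le Θ hmeas n) (hs n).stronglyMeasurable (hint n)
    have h3 := condexp_step P Θ hmeas hindep e he n (K n) (hK n) (hKb n)
    filter_upwards [h1, h3] with ω h1 h3
    show s n ω ≤ (P[s (n+1) | (filtrF Θ hmeas) n]) ω
    have : (P[s (n+1) | (filtrF Θ hmeas) n]) ω = s n ω + K n ω * e := by
      show (P[s (n+1) | filtr Θ n]) ω = _
      rw [h1, Pi.add_apply, h2, h3]
    rw [this]
    linarith [hsign n ω]
  have hbdd : ∀ n, eLpNorm (s n) 1 P ≤ (1 : ℝ≥0∞) := by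
    intro n
    have := eLpNorm_le_of_ae_bound (p := 1) (μ := P) (f := s n) (C := 1)
      (ae_of_all _ fun ω => by simpa using hsb n ω)
    simpa using this
  exact hsub.exists_ae_tendsto_of_bdd hbdd

lemma measX (Θ : ℕ → Ω → ℝ) (x : EuclideanSpace ℝ (Fin 3)) :
    ∀ n, ∀ j : Fin 3, Measurable[filtr Θ n] (fun ω => phiRDS (fun k => clamp (Θ k ω)) n x j) := by
  intro n
  induction n with
  | zero => intro j; exact (measurable_const : Measurable[filtr Θ 0] fun _ : Ω => x j)
  | succ n ih =>
    intro j
    have hth : Measurable[filtr Θ (n+1)] (fun ω => clamp (Θ n ω)) :=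
      measurable_clamp.comp (measurable_theta_filtr Θ (Nat.lt_succ_self n))
    have ih' : ∀ j : Fin 3, Measurable[filtr Θ (n+1)]
        (fun ω => phiRDS (fun k => clamp (Θ k ω)) n x j) :=
      fun j => (ih j).mono (filtr_mono Θ (Nat.le_succ n)) le_rfl
    have h0 := ih' 0; have h1 := ih' 1; have h2 := ih' 2
    show Measurable[filtr Θ (n+1)]
      (fun ω => Vcso (clamp (Θ n ω)) (phiRDS (fun k => clamp (Θ k ω)) n x) j)
    have key : ∀ a b c : Ω → ℝ, Measurable[filtr Θ (n+1)] a → Measurable[filtr Θ (n+1)] b →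
        Measurable[filtr Θ (n+1)] c → Measurable[filtr Θ (n+1)] (fun ω => a ω * (a ω ^ 2 +
          3 * clamp (Θ n ω) * a ω * (b ω + c ω) + 3 * (1 - clamp (Θ n ω)) * (b ω ^ 2 + c ω ^ 2) +
          2 * b ω * c ω)) := by
      intro a b c ha hb hc
      fun_prop
    fin_cases j <;>
      simp only [Vcso, Fin.zero_eta, Fin.mk_one, show (⟨2, by norm_num⟩ : Fin 3) = 2 from rfl,
          Matrix.cons_val_zero, Matrix.cons_val_one, Matrix.head_cons,
          Matrix.cons_val_two, Matrix.tail_cons, PiLp.toLp_apply, WithLp.ofLp_toLp]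
    · exact key _ _ _ h0 h1 h2
    · exact key _ _ _ h1 h2 h0
    · exact key _ _ _ h2 h0 h1

lemma eq_dirac_of_singleton {μ : Measure ℝ} [IsProbabilityMeasure μ] {a : ℝ}
    (h : μ {a} = 1) : μ = Measure.dirac a := by
  ext s hs
  rw [Measure.dirac_apply' a hs]
  by_cases hmem : a ∈ s
  · have h1 : μ s ≤ 1 := prob_le_one
    have h2 : (1:ℝ≥0∞) ≤ μ s := h ▸ measure_mono (Set.singleton_subset_iff.2 hmem)
    simp [Set.indicator_of_mem hmem, le_antisymm h1 h2]
  · have hsub : s ⊆ {a}ᶜ := fun t ht => fun hta => hmem (hta ▸ ht)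
    have : μ {a}ᶜ = 0 := by
      rw [measure_compl (measurableSet_singleton a) (measure_ne_top μ _), h]
      simp
    simp [Set.indicator_of_notMem hmem,
      le_antisymm (le_trans (measure_mono hsub) this.le) zero_le]

lemma exists_delta {μ : Measure ℝ} [IsProbabilityMeasure μ] (hμ1 : μ (Set.Icc 0 1) = 1)
    (hμ : μ ≠ Measure.dirac (2/3 : ℝ)) :
    ∃ δ : ℝ, 0 < δ ∧ 0 < μ (Set.Icc (0:ℝ) 1 \ Set.Ioo (2/3 - δ) (2/3 + δ)) := by
  by_contra hcon
  push_neg at hcon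
  have hzero : ∀ δ : ℝ, 0 < δ → μ (Set.Icc (0:ℝ) 1 \ Set.Ioo (2/3 - δ) (2/3 + δ)) = 0 :=
    fun δ hδ => le_antisymm (hcon δ hδ) zero_le
  have hcover : Set.Icc (0:ℝ) 1 \ {(2/3:ℝ)} ⊆
      ⋃ k : ℕ, (Set.Icc (0:ℝ) 1 \ Set.Ioo (2/3 - 1/(k+1)) (2/3 + 1/(k+1))) := by
    intro t ⟨ht, hne⟩
    have hne' : t ≠ 2/3 := by simpa using hne
    have habs : 0 < |t - 2/3| := abs_pos.2 (sub_ne_zero.2 hne')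
    obtain ⟨k, hk⟩ := exists_nat_one_div_lt habs
    refine Set.mem_iUnion.2 ⟨k, ht, fun hio => ?_⟩
    obtain ⟨hl, hr⟩ := hio
    have : |t - 2/3| < 1/(k+1) := abs_sub_lt_iff.2 ⟨by linarith, by linarith⟩
    linarith
  have hug : μ (Set.Icc (0:ℝ) 1 \ {(2/3:ℝ)}) = 0 :=
    le_antisymm (le_trans (measure_mono hcover)
      (le_of_eq (measure_iUnion_null fun k => hzero _ (by positivity)))) zero_le
  have hsing : μ {(2/3:ℝ)} = 1 := by
    have : μ (Set.Icc (0:ℝ) 1) ≤ μ {(2/3:ℝ)} + μ (Set.Icc (0:ℝ) 1 \ {(2/3:ℝ)}) := by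
      apply le_trans (measure_mono (by intro t ht; by_cases h : t = 2/3 <;> simp [h, ht]))
        (measure_union_le _ _)
    rw [hμ1, hug, add_zero] at this
    exact le_antisymm prob_le_one this
  exact hμ (eq_dirac_of_singleton hsing)

lemma freq_in_S (P : Measure Ω) [IsProbabilityMeasure P]
    (Θ : ℕ → Ω → ℝ) (hmeas : ∀ n, Measurable (Θ n))
    (hindep : iIndepFun Θ P)
    (μ : Measure ℝ) (hlaw : ∀ n, Measure.map (Θ n) P = μ)
    (S : Set ℝ) (hS : MeasurableSet S) (hpos : 0 < μ S) :
    ∀ᵐ ω ∂P, ∃ᶠ n in atTop, Θ n ω ∈ S := by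
  have hEmeas : ∀ n, MeasurableSet (Θ n ⁻¹' S) := fun n => (hmeas n) hS
  have hPE : ∀ n, P (Θ n ⁻¹' S) = μ S := fun n => by
    rw [← hlaw n, Measure.map_apply (hmeas n) hS]
  have hiis : iIndepSet (fun n => Θ n ⁻¹' S) P := by
    rw [iIndepSet_iff_meas_biInter hEmeas]
    intro s
    have := hindep.measure_inter_preimage_eq_mul (sets := fun _ => S) s (fun i _ => hS)
    simpa using this
  have hsum : (∑' n, P (Θ n ⁻¹' S)) = ∞ := by
    simp only [hPE]
    exact ENNReal.tsum_const_eq_top_of_ne_zero hpos.ne'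
  have hone := measure_limsup_eq_one hEmeas hiis hsum
  have hms : MeasurableSet (limsup (fun n => Θ n ⁻¹' S) atTop) :=
    MeasurableSet.measurableSet_limsup hEmeas
  have : ∀ᵐ ω ∂P, ω ∈ limsup (fun n => Θ n ⁻¹' S) atTop := by
    rw [ae_iff]
    have heq : {ω | ¬ ω ∈ limsup (fun n => Θ n ⁻¹' S) atTop}
        = (limsup (fun n => Θ n ⁻¹' S) atTop)ᶜ := rfl
    rw [heq, measure_compl hms (measure_ne_top P _), hone, measure_univ]
    simp
  filter_upwards [this] with ω hω
  exact mem_limsup_iff_frequently_mem.1 hω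

lemma law_values (P : Measure Ω) [IsProbabilityMeasure P]
    (Θ : ℕ → Ω → ℝ) (hmeas : ∀ n, Measurable (Θ n))
    (μ : Measure ℝ) (hlaw : ∀ n, Measure.map (Θ n) P = μ) (hμ1 : μ (Set.Icc 0 1) = 1) :
    ∀ᵐ ω ∂P, ∀ n, Θ n ω ∈ Set.Icc (0:ℝ) 1 := by
  rw [ae_all_iff]
  intro n
  have : P (Θ n ⁻¹' (Set.Icc (0:ℝ) 1)) = 1 := by
    rw [← Measure.map_apply (hmeas n) measurableSet_Icc, hlaw n]; exact hμ1
  rw [ae_iff]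
  have hc : P ((Θ n ⁻¹' (Set.Icc (0:ℝ) 1))ᶜ) = 0 := by
    rw [measure_compl ((hmeas n) measurableSet_Icc) (measure_ne_top P _), this]; simp
  convert hc using 2
  rfl

end Aux


set_option maxHeartbeats 2000000 in
/-- Theorem 2.1: almost surely, every trajectory of the RDS converges to one of the seven
fixed points in 𝒜. -/
theorem convergence_to_fixed_points (μ : Measure ℝ) [IsProbabilityMeasure μ] (hμ1 : μ (Set.Icc 0 1) = 1)
    (hμ : μ ≠ Measure.dirac (2/3 : ℝ))
    {Ω : Type*} [MeasurableSpace Ω] (P : Measure Ω) [IsProbabilityMeasure P]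
    (Θ : ℕ → Ω → ℝ) (hmeas : ∀ n, Measurable (Θ n))
    (hindep : iIndepFun Θ P)
    (hlaw : ∀ n, Measure.map (Θ n) P = μ)
    (x : EuclideanSpace ℝ (Fin 3)) (hx : x ∈ simplex2) :
    ∀ᵐ ω ∂P, ∃ p ∈ fixedA,
      Tendsto (fun n => phiRDS (fun k => Θ k ω) n x) atTop (𝓝 p) := by
  classical
  obtain ⟨i0, i1, i2, h01, h02, h12, hord1, hord2⟩ :
      ∃ i0 i1 i2 : Fin 3, i0 ≠ i1 ∧ i0 ≠ i2 ∧ i1 ≠ i2 ∧ x i1 ≤ x i0 ∧ x i2 ≤ x i1 := by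
    rcases le_total (x 0) (x 1) with h01 | h01 <;>
      rcases le_total (x 1) (x 2) with h12 | h12 <;>
      rcases le_total (x 0) (x 2) with h02 | h02
    · exact ⟨2, 1, 0, by decide, by decide, by decide, h12, h01⟩
    · exact ⟨2, 1, 0, by decide, by decide, by decide, h12, h01⟩
    · exact ⟨1, 2, 0, by decide, by decide, by decide, h12, h02⟩
    · exact ⟨1, 0, 2, by decide, by decide, by decide, h01, h02⟩
    · exact ⟨2, 0, 1, by decide, by decide, by decide, h02, h01⟩
    · exact ⟨0, 2, 1, by decide, by decide, by decide, h02, h12⟩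
    · exact ⟨0, 1, 2, by decide, by decide, by decide, h01, h12⟩
    · exact ⟨0, 1, 2, by decide, by decide, by decide, h01, h12⟩
  have hrep := fun (θ : ℝ) (y : EuclideanSpace ℝ (Fin 3)) => Vcso_rep h01 h02 h12 θ y
  have hsum3 := fun (f : Fin 3 → ℝ) => fin3_sum h01 h02 h12 f
  have hcover := fin3_cover h01 h02 h12
  set X : ℕ → Ω → EuclideanSpace ℝ (Fin 3) :=
    fun n ω => phiRDS (fun k => clamp (Θ k ω)) n x with hXdef
  have hInv : ∀ ω n, X n ω ∈ simplex2 ∧ X n ω i1 ≤ X n ω i0 ∧ X n ω i2 ≤ X n ω i1 := by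
    intro ω n
    induction n with
    | zero => exact ⟨hx, hord1, hord2⟩
    | succ n ih =>
      exact Vcso_step hrep hsum3 (clamp_nonneg _) (clamp_le_one _) ih.1 ⟨ih.2.1, ih.2.2⟩
  have hcb : ∀ n ω (j : Fin 3), 0 ≤ X n ω j ∧ X n ω j ≤ 1 :=
    fun n ω => simplex_coord (hInv ω n).1
  have hsX : ∀ n ω, X n ω i0 + X n ω i1 + X n ω i2 = 1 := by
    intro n ω
    rw [hsum3 (fun j => X n ω j)]
    exact (hInv ω n).1.2.2.2
  set q : ℕ → Ω → ℝ :=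
    fun n ω => (X n ω i0)^2 + (X n ω i1)^2 + (X n ω i2)^2 with hqdef
  have hq01 : ∀ n ω, 0 ≤ q n ω ∧ q n ω ≤ 1 := by
    intro n ω
    have h0 := hcb n ω i0; have h1 := hcb n ω i1; have h2 := hcb n ω i2
    have hss := hsX n ω
    constructor
    · simp only [hqdef]; positivity
    · simp only [hqdef]; nlinarith [h0.1, h1.1, h2.1]
  -- step identities for the three tracked coordinates
  have hstep0 : ∀ n ω, X (n+1) ω i0
      = X n ω i0 + (X n ω i0 * (X n ω i0 - q n ω)) * (3 * clamp (Θ n ω) - 2) := by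
    intro n ω
    have hX1 : X (n+1) ω = Vcso (clamp (Θ n ω)) (X n ω) := rfl
    rw [hX1, (hrep _ (X n ω)).1, Waux_clean _ _ _ _ (hsX n ω)]
    simp only [hqdef]; ring
  have hstep1 : ∀ n ω, X (n+1) ω i1
      = X n ω i1 + (X n ω i1 * (X n ω i1 - q n ω)) * (3 * clamp (Θ n ω) - 2) := by
    intro n ω
    have hX1 : X (n+1) ω = Vcso (clamp (Θ n ω)) (X n ω) := rfl
    rw [hX1, (hrep _ (X n ω)).2.1,
      Waux_clean _ _ _ _ (by linarith [hsX n ω] : X n ω i1 + X n ω i2 + X n ω i0 = 1)]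
    simp only [hqdef]; ring
  have hstep2 : ∀ n ω, X (n+1) ω i2
      = X n ω i2 + (X n ω i2 * (X n ω i2 - q n ω)) * (3 * clamp (Θ n ω) - 2) := by
    intro n ω
    have hX1 : X (n+1) ω = Vcso (clamp (Θ n ω)) (X n ω) := rfl
    rw [hX1, (hrep _ (X n ω)).2.2,
      Waux_clean _ _ _ _ (by linarith [hsX n ω] : X n ω i2 + X n ω i0 + X n ω i1 = 1)]
    simp only [hqdef]; ring
  -- measurability
  have hmX : ∀ n (j : Fin 3), Measurable[filtr Θ n] (fun ω => X n ω j) := measX Θ x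
  have hmq : ∀ n, Measurable[filtr Θ n] (q n) := by
    intro n
    have : q n = fun ω => X n ω i0 * X n ω i0 + X n ω i1 * X n ω i1 + X n ω i2 * X n ω i2 := by
      funext ω; simp only [hqdef]; ring
    rw [this]
    exact (((hmX n i0).mul (hmX n i0)).add ((hmX n i1).mul (hmX n i1))).add
      ((hmX n i2).mul (hmX n i2))
  have hKmeas : ∀ (i : Fin 3) n, Measurable[filtr Θ n] (fun ω => X n ω i * (X n ω i - q n ω)) :=
    fun i n => (hmX n i).mul ((hmX n i).sub (hmq n))
  have hKbound : ∀ (i : Fin 3) n (ω : Ω), |X n ω i * (X n ω i - q n ω)| ≤ 2 := by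
    intro i n ω
    have h := hcb n ω i; have hq := hq01 n ω
    rw [abs_mul]
    have h1 : |X n ω i| ≤ 1 := abs_le.2 ⟨by linarith [h.1], h.2⟩
    have h2 : |X n ω i - q n ω| ≤ 1 := abs_le.2 ⟨by linarith [h.1, hq.2], by linarith [h.2, hq.1]⟩
    nlinarith [abs_nonneg (X n ω i), abs_nonneg (X n ω i - q n ω)]
  have hsbound : ∀ (i : Fin 3) n (ω : Ω), |X n ω i| ≤ 1 := by
    intro i n ω
    have h := hcb n ω i
    exact abs_le.2 ⟨by linarith [h.1], h.2⟩
  -- sign facts from the ordering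
  have hKA_nonneg : ∀ n ω, 0 ≤ X n ω i0 * (X n ω i0 - q n ω) := by
    intro n ω
    obtain ⟨_, ho1, ho2⟩ := hInv ω n
    have h0 := hcb n ω i0; have h1 := hcb n ω i1; have h2 := hcb n ω i2
    have hss := hsX n ω
    have : 0 ≤ X n ω i0 - q n ω := by simp only [hqdef]; nlinarith
    exact mul_nonneg h0.1 this
  have hKC_nonpos : ∀ n ω, X n ω i2 * (X n ω i2 - q n ω) ≤ 0 := by
    intro n ω
    obtain ⟨_, ho1, ho2⟩ := hInv ω n
    have h0 := hcb n ω i0; have h1 := hcb n ω i1; have h2 := hcb n ω i2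
    have hss := hsX n ω
    have : X n ω i2 - q n ω ≤ 0 := by simp only [hqdef]; nlinarith
    exact mul_nonpos_of_nonneg_of_nonpos h2.1 this
  -- the mean drift
  set e : ℝ := ∫ t, (3 * clamp t - 2) ∂μ with hedef
  have hgm : Measurable (fun t : ℝ => 3 * clamp t - 2) :=
    (measurable_clamp.const_mul 3).sub measurable_const
  have he : ∀ n, ∫ ω, (3 * clamp (Θ n ω) - 2) ∂P = e := by
    intro n
    rw [hedef, ← hlaw n, integral_map (hmeas n).aemeasurable hgm.aestronglyMeasurable]
  -- almost sure convergence of the extreme coordinates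
  have hconvA : ∀ᵐ ω ∂P, ∃ L, Tendsto (fun n => X n ω i0) atTop (𝓝 L) := by
    rcases le_total 0 e with he' | he'
    · exact ae_exists_lim P Θ hmeas hindep e he (fun n ω => X n ω i0)
        (fun n ω => X n ω i0 * (X n ω i0 - q n ω)) (fun n => hmX n i0) (hsbound i0)
        (hKmeas i0) (hKbound i0) hstep0
        (fun n ω => mul_nonneg (hKA_nonneg n ω) he')
    · have := ae_exists_lim P Θ hmeas hindep e he (fun n ω => -(X n ω i0))
        (fun n ω => -(X n ω i0 * (X n ω i0 - q n ω)))
        (fun n => (hmX n i0).neg)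
        (fun n ω => by show |(-(X n ω i0))| ≤ 1; rw [abs_neg]; exact hsbound i0 n ω)
        (fun n => (hKmeas i0 n).neg)
        (fun n ω => by
          show |(-(X n ω i0 * (X n ω i0 - q n ω)))| ≤ 2
          rw [abs_neg]; exact hKbound i0 n ω)
        (fun n ω => by
          show -(X (n+1) ω i0) = -(X n ω i0) +
            -(X n ω i0 * (X n ω i0 - q n ω)) * (3 * clamp (Θ n ω) - 2)
          rw [hstep0 n ω]; ring)
        (fun n ω => by
          show 0 ≤ -(X n ω i0 * (X n ω i0 - q n ω)) * e
          nlinarith [hKA_nonneg n ω, he'])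
      filter_upwards [this] with ω hω
      obtain ⟨L, hL⟩ := hω
      exact ⟨-L, by simpa using hL.neg⟩
  have hconvC : ∀ᵐ ω ∂P, ∃ L, Tendsto (fun n => X n ω i2) atTop (𝓝 L) := by
    rcases le_total 0 e with he' | he'
    · have := ae_exists_lim P Θ hmeas hindep e he (fun n ω => -(X n ω i2))
        (fun n ω => -(X n ω i2 * (X n ω i2 - q n ω)))
        (fun n => (hmX n i2).neg)
        (fun n ω => by show |(-(X n ω i2))| ≤ 1; rw [abs_neg]; exact hsbound i2 n ω)
        (fun n => (hKmeas i2 n).neg)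
        (fun n ω => by
          show |(-(X n ω i2 * (X n ω i2 - q n ω)))| ≤ 2
          rw [abs_neg]; exact hKbound i2 n ω)
        (fun n ω => by
          show -(X (n+1) ω i2) = -(X n ω i2) +
            -(X n ω i2 * (X n ω i2 - q n ω)) * (3 * clamp (Θ n ω) - 2)
          rw [hstep2 n ω]; ring)
        (fun n ω => by
          show 0 ≤ -(X n ω i2 * (X n ω i2 - q n ω)) * e
          nlinarith [hKC_nonpos n ω, he'])
      filter_upwards [this] with ω hω
      obtain ⟨L, hL⟩ := hω
      exact ⟨-L, by simpa using hL.neg⟩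
    · exact ae_exists_lim P Θ hmeas hindep e he (fun n ω => X n ω i2)
        (fun n ω => X n ω i2 * (X n ω i2 - q n ω)) (fun n => hmX n i2) (hsbound i2)
        (hKmeas i2) (hKbound i2) hstep2
        (fun n ω => by
          show 0 ≤ X n ω i2 * (X n ω i2 - q n ω) * e
          nlinarith [hKC_nonpos n ω, he'])
  -- the exceptional parameter set
  obtain ⟨δ, hδpos, hδS⟩ := exists_delta hμ1 hμ
  filter_upwards [law_values P Θ hmeas μ hlaw hμ1, hconvA, hconvC,
    freq_in_S P Θ hmeas hindep μ hlaw (Set.Icc (0:ℝ) 1 \ Set.Ioo (2/3 - δ) (2/3 + δ))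
      (measurableSet_Icc.diff measurableSet_Ioo) hδS] with ω hval hA' hC' hfreq
  obtain ⟨α, hA⟩ := hA'
  obtain ⟨γ, hC⟩ := hC'
  have hBeq : ∀ n, X n ω i1 = 1 - X n ω i0 - X n ω i2 := fun n => by linarith [hsX n ω]
  have hB : Tendsto (fun n => X n ω i1) atTop (𝓝 (1 - α - γ)) := by
    simp only [hBeq]
    exact (tendsto_const_nhds.sub hA).sub hC
  set β : ℝ := 1 - α - γ with hβ
  set p : EuclideanSpace ℝ (Fin 3) :=
    WithLp.toLp 2 (fun j => if j = i0 then α else if j = i1 then β else γ) with hp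
  have hpi0 : p i0 = α := by rw [hp]; simp
  have hpi1 : p i1 = β := by rw [hp]; simp [Ne.symm h01]
  have hpi2 : p i2 = γ := by rw [hp]; simp [Ne.symm h02, Ne.symm h12]
  have hXj : ∀ j : Fin 3, Tendsto (fun n => X n ω j) atTop (𝓝 (p j)) := by
    intro j
    rcases hcover j with h | h | h <;> rw [h]
    · rw [hpi0]; exact hA
    · rw [hpi1]; exact hB
    · rw [hpi2]; exact hC
  have hXp : Tendsto (fun n => X n ω) atTop (𝓝 p) := by
    have h' : Tendsto (fun n => (WithLp.equiv 2 _ (X n ω) : Fin 3 → ℝ)) atTop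
        (𝓝 (WithLp.equiv 2 _ p)) := tendsto_pi_nhds.2 hXj
    exact ((PiLp.continuousLinearEquiv 2 ℝ (fun _ : Fin 3 => ℝ)).symm.continuous.tendsto _).comp h'
  have hple : ∀ j : Fin 3, 0 ≤ p j := by
    intro j
    rcases hcover j with h | h | h <;> rw [h]
    · rw [hpi0]; exact ge_of_tendsto' hA (fun n => (hcb n ω i0).1)
    · rw [hpi1]; exact ge_of_tendsto' hB (fun n => (hcb n ω i1).1)
    · rw [hpi2]; exact ge_of_tendsto' hC (fun n => (hcb n ω i2).1)
  have hpsum : p 0 + p 1 + p 2 = 1 := by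
    rw [← hsum3 (fun j => p j), hpi0, hpi1, hpi2, hβ]; ring
  have hqlim : Tendsto (fun n => q n ω) atTop (𝓝 (α^2 + β^2 + γ^2)) := by
    simp only [hqdef]
    exact ((hA.pow 2).add (hB.pow 2)).add (hC.pow 2)
  have hdelta_bound : ∀ n, Θ n ω ∈ (Set.Icc (0:ℝ) 1 \ Set.Ioo (2/3 - δ) (2/3 + δ)) →
      3 * δ ≤ |3 * clamp (Θ n ω) - 2| := by
    intro n hn
    obtain ⟨hicc, hio⟩ := hn
    rw [clamp_eq hicc]
    rw [Set.mem_Ioo, not_and_or, not_lt, not_lt] at hio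
    rcases hio with h | h
    · exact le_abs.2 (Or.inr (by linarith))
    · exact le_abs.2 (Or.inl (by linarith))
  have keyL : ∀ (w u : ℕ → ℝ) (M L : ℝ), Tendsto w atTop (𝓝 M) → Tendsto u atTop (𝓝 L) →
      (∀ n, w (n+1) - w n = u n * (3 * clamp (Θ n ω) - 2)) → L = 0 := by
    intro w u M L hw hu hrel
    have hd : Tendsto (fun n => |w (n+1) - w n|) atTop (𝓝 0) := by
      have h1 : Tendsto (fun n => w (n+1) - w n) atTop (𝓝 (M - M)) :=
        (hw.comp (tendsto_add_atTop_nat 1)).sub hw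
      rw [sub_self] at h1
      simpa using h1.abs
    have habs : Tendsto (fun n => |u n| * (3*δ)) atTop (𝓝 (|L| * (3*δ))) := hu.abs.mul_const _
    have hfreq' : ∃ᶠ n in atTop, |u n| * (3*δ) - |w (n+1) - w n| ≤ 0 := by
      refine hfreq.mono fun n hn => ?_
      have h1 : |w (n+1) - w n| = |u n| * |3 * clamp (Θ n ω) - 2| := by rw [hrel n, abs_mul]
      have h2 := hdelta_bound n hn
      nlinarith [abs_nonneg (u n)]
    have hle := le_of_tendsto_of_frequently (habs.sub hd) hfreq'
    rw [sub_zero] at hle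
    have hL : |L| ≤ 0 := by nlinarith
    exact abs_eq_zero.1 (le_antisymm hL (abs_nonneg L))
  have key0 : α * (α - (α^2+β^2+γ^2)) = 0 :=
    keyL (fun n => X n ω i0) (fun n => X n ω i0 * (X n ω i0 - q n ω)) α
      (α * (α - (α^2+β^2+γ^2)))
      hA (hA.mul (hA.sub hqlim)) (fun n => by
        show X (n+1) ω i0 - X n ω i0
          = X n ω i0 * (X n ω i0 - q n ω) * (3 * clamp (Θ n ω) - 2)
        rw [hstep0 n ω]; ring)
  have key1 : β * (β - (α^2+β^2+γ^2)) = 0 :=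
    keyL (fun n => X n ω i1) (fun n => X n ω i1 * (X n ω i1 - q n ω)) β
      (β * (β - (α^2+β^2+γ^2)))
      hB (hB.mul (hB.sub hqlim)) (fun n => by
        show X (n+1) ω i1 - X n ω i1
          = X n ω i1 * (X n ω i1 - q n ω) * (3 * clamp (Θ n ω) - 2)
        rw [hstep1 n ω]; ring)
  have key2 : γ * (γ - (α^2+β^2+γ^2)) = 0 :=
    keyL (fun n => X n ω i2) (fun n => X n ω i2 * (X n ω i2 - q n ω)) γ
      (γ * (γ - (α^2+β^2+γ^2)))
      hC (hC.mul (hC.sub hqlim)) (fun n => by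
        show X (n+1) ω i2 - X n ω i2
          = X n ω i2 * (X n ω i2 - q n ω) * (3 * clamp (Θ n ω) - 2)
        rw [hstep2 n ω]; ring)
  have hQ : (p 0)^2 + (p 1)^2 + (p 2)^2 = α^2 + β^2 + γ^2 := by
    rw [← hsum3 (fun j => p j ^ 2), hpi0, hpi1, hpi2]
  have hpfix : ∀ j : Fin 3, p j * (p j - ((p 0)^2 + (p 1)^2 + (p 2)^2)) = 0 := by
    intro j
    rw [hQ]
    rcases hcover j with h | h | h <;> rw [h]
    · rw [hpi0]; exact key0
    · rw [hpi1]; exact key1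
    · rw [hpi2]; exact key2
  refine ⟨p, fixedA_char p ⟨hple 0, hple 1, hple 2, hpsum⟩ hpfix, ?_⟩
  have hfun : (fun k => clamp (Θ k ω)) = (fun k => Θ k ω) :=
    funext fun k => clamp_eq (hval k)
  rw [← hfun]
  exact hXp
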